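/- If F : [0,∞) → ℝ is uniformly bounded by U ≥ 0, then the normalizing constant A(α,β) = Σ_{x ∈ ℕ^P} exp(Σ_j (α_j x_j − log(x_j!)) − Σ_{j<l} β_{jl} F(x_j) F(x_l)) satisfies exp(Σ_j exp(α_j) − U² Σ_{j<l} |β_{jl}|) ≤ A(α,β) ≤ exp(Σ_j exp(α_j) + U² Σ_{j<l} |β_{jl}|). -/

import Mathlib

open scoped BigOperators

noncomputable def nodeSum {P : ℕ} (α : Fin P → ℝ) (x : Fin P → ℕ) : ℝ :=
  ∑ j, (α j * (x j : ℝ) - Real.log (Nat.factorial (x j)))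

noncomputable def edgeSum {P : ℕ} (β : Fin P → Fin P → ℝ) (F : ℕ → ℝ) (x : Fin P → ℕ) : ℝ :=
  ∑ j, ∑ l, if j < l then β j l * F (x j) * F (x l) else 0

/-- Unnormalized weight of the pairwise MRF for counts. -/
noncomputable def w {P : ℕ} (α : Fin P → ℝ) (β : Fin P → Fin P → ℝ) (F : ℕ → ℝ)
    (x : Fin P → ℕ) : ℝ :=
  Real.exp (nodeSum α x - edgeSum β F x)

/-- Normalizing constant A(α,β). -/
noncomputable def Anorm {P : ℕ} (α : Fin P → ℝ) (β : Fin P → Fin P → ℝ) (F : ℕ → ℝ) : ℝ :=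
  ∑' x : Fin P → ℕ, w α β F x

/-- The transformation F(x) = (arctan x)^θ. -/
noncomputable def Fpow (θ : ℝ) : ℕ → ℝ := fun n => Real.arctan (n : ℝ) ^ θ

set_option maxHeartbeats 1000000 in
lemma pi_hasSum : ∀ (n : ℕ) (g : Fin n → ℕ → ℝ), (∀ i m, 0 ≤ g i m) → (∀ i, Summable (g i)) →
    HasSum (fun x : Fin n → ℕ => ∏ i, g i (x i)) (∏ i, ∑' m, g i m) := by
  intro n
  induction n with
  | zero =>
    intro g _ _
    simpa using hasSum_unique (fun _ : Fin 0 → ℕ => (1:ℝ))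
  | succ n ih =>
    intro g h0 hs
    have ihn := ih (fun i => g i.succ) (fun i => h0 i.succ) (fun i => hs i.succ)
    have hmul : Summable fun p : ℕ × (Fin n → ℕ) =>
        g 0 p.1 * ∏ i : Fin n, g i.succ (p.2 i) := by
      apply Summable.mul_of_nonneg (hs 0) ihn.summable (fun m => h0 0 m)
      exact fun x => Finset.prod_nonneg fun i _ => h0 i.succ (x i)
    have hG : HasSum (fun p : ℕ × (Fin n → ℕ) => g 0 p.1 * ∏ i : Fin n, g i.succ (p.2 i))
        ((∑' m, g 0 m) * ∏ i : Fin n, ∑' m, g i.succ m) := by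
      apply HasSum.mul (hs 0).hasSum ihn hmul
    have he := (Fin.consEquiv fun _ => ℕ).symm.hasSum_iff.mpr hG
    rw [Fin.prod_univ_succ]
    simpa [Fin.prod_univ_succ, Function.comp_def, Fin.consEquiv, Fin.tail] using he

lemma exp_hasSum (a : ℝ) : HasSum (fun m : ℕ => Real.exp a ^ m / m.factorial) (Real.exp (Real.exp a)) := by
  have h := NormedSpace.exp_series_hasSum_exp' (𝕂 := ℝ) (Real.exp a)
  have h2 : Real.exp (Real.exp a) = NormedSpace.exp (Real.exp a) := by
    rw [Real.exp_eq_exp_ℝ]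
  rw [h2]
  simpa [smul_eq_mul, div_eq_inv_mul] using h

set_option maxHeartbeats 1000000 in
theorem stmt0 (P : ℕ) (hP : 0 < P) (α : Fin P → ℝ) (β : Fin P → Fin P → ℝ)
    (F : ℕ → ℝ) (U : ℝ) (hU : 0 ≤ U) (hF0 : ∀ x, 0 ≤ F x) (hFU : ∀ x, F x ≤ U) :
    Real.exp ((∑ j, Real.exp (α j)) - U ^ 2 * ∑ j, ∑ l, if j < l then |β j l| else 0)
        ≤ Anorm α β F ∧
      Anorm α β F
        ≤ Real.exp ((∑ j, Real.exp (α j)) + U ^ 2 * ∑ j, ∑ l, if j < l then |β j l| else 0) := by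
  set E : ℝ := U ^ 2 * ∑ j, ∑ l, if j < l then |β j l| else 0 with hE
  set g : Fin P → ℕ → ℝ := fun j m => Real.exp (α j) ^ m / m.factorial with hg
  have hg0 : ∀ j m, 0 ≤ g j m := fun j m =>
    div_nonneg (pow_nonneg (Real.exp_pos _).le _) (by positivity)
  have hgs : ∀ j, Summable (g j) := fun j => (exp_hasSum (α j)).summable
  have hS : HasSum (fun x : Fin P → ℕ => ∏ j, g j (x j)) (Real.exp (∑ j, Real.exp (α j))) := by
    have := pi_hasSum P g hg0 hgs
    have heq : (∏ j, ∑' m, g j m) = Real.exp (∑ j, Real.exp (α j)) := by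
      rw [Real.exp_sum]
      exact Finset.prod_congr rfl fun j _ => (exp_hasSum (α j)).tsum_eq
    rwa [heq] at this
  -- node sum exponential equals product of g
  have hnode : ∀ x : Fin P → ℕ, Real.exp (nodeSum α x) = ∏ j, g j (x j) := by
    intro x
    rw [nodeSum, Real.exp_sum]
    refine Finset.prod_congr rfl fun j _ => ?_
    rw [Real.exp_sub, Real.exp_log (by exact_mod_cast (x j).factorial_pos)]
    congr 1
    rw [mul_comm, Real.exp_nat_mul]
  -- edge sum bound
  have hedge : ∀ x : Fin P → ℕ, |edgeSum β F x| ≤ E := by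
    intro x
    rw [edgeSum, hE, Finset.mul_sum]
    refine (Finset.abs_sum_le_sum_abs _ _).trans (Finset.sum_le_sum fun j _ => ?_)
    rw [Finset.mul_sum]
    refine (Finset.abs_sum_le_sum_abs _ _).trans (Finset.sum_le_sum fun l _ => ?_)
    by_cases h : j < l
    · simp only [h, if_true]
      rw [abs_mul, abs_mul]
      have h1 : |F (x j)| ≤ U := by rw [abs_of_nonneg (hF0 _)]; exact hFU _
      have h2 : |F (x l)| ≤ U := by rw [abs_of_nonneg (hF0 _)]; exact hFU _
      calc |β j l| * |F (x j)| * |F (x l)| ≤ |β j l| * U * U := by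
            apply mul_le_mul (mul_le_mul le_rfl h1 (abs_nonneg _) (abs_nonneg _)) h2 (abs_nonneg _)
            positivity
        _ = U ^ 2 * |β j l| := by ring
    · simp [h]
  have hEnn : 0 ≤ E := by
    rw [hE]
    apply mul_nonneg (by positivity)
    apply Finset.sum_nonneg fun j _ => Finset.sum_nonneg fun l _ => ?_
    by_cases h : j < l <;> simp [h, abs_nonneg]
  -- pointwise bounds on w
  have hwub : ∀ x, w α β F x ≤ (∏ j, g j (x j)) * Real.exp E := by
    intro x
    have h1 : nodeSum α x - edgeSum β F x ≤ nodeSum α x + E := by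
      have := (abs_le.mp (hedge x)).1; linarith
    calc w α β F x ≤ Real.exp (nodeSum α x + E) := Real.exp_le_exp.mpr h1
      _ = (∏ j, g j (x j)) * Real.exp E := by rw [Real.exp_add, hnode]
  have hwlb : ∀ x, (∏ j, g j (x j)) * Real.exp (-E) ≤ w α β F x := by
    intro x
    have h1 : nodeSum α x - E ≤ nodeSum α x - edgeSum β F x := by
      have := (abs_le.mp (hedge x)).2; linarith
    calc (∏ j, g j (x j)) * Real.exp (-E) = Real.exp (nodeSum α x - E) := by
          rw [Real.exp_sub, hnode, Real.exp_neg, div_eq_mul_inv]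
      _ ≤ w α β F x := Real.exp_le_exp.mpr h1
  have hw0 : ∀ x, 0 ≤ w α β F x := fun x => (Real.exp_pos _).le
  have hub_summable : Summable fun x : Fin P → ℕ => (∏ j, g j (x j)) * Real.exp E :=
    hS.summable.mul_right _
  have hw_summable : Summable (w α β F) :=
    Summable.of_nonneg_of_le hw0 hwub hub_summable
  have hlb_summable : Summable fun x : Fin P → ℕ => (∏ j, g j (x j)) * Real.exp (-E) :=
    hS.summable.mul_right _
  constructor
  · calc Real.exp ((∑ j, Real.exp (α j)) - E)
        = Real.exp (∑ j, Real.exp (α j)) * Real.exp (-E) := by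
          rw [← Real.exp_add]; ring_nf
      _ = ∑' x : Fin P → ℕ, (∏ j, g j (x j)) * Real.exp (-E) := by
          rw [tsum_mul_right, hS.tsum_eq]
      _ ≤ Anorm α β F := hlb_summable.tsum_le_tsum hwlb hw_summable
  · calc Anorm α β F
        ≤ ∑' x : Fin P → ℕ, (∏ j, g j (x j)) * Real.exp E :=
          hw_summable.tsum_le_tsum hwub hub_summable
      _ = Real.exp (∑ j, Real.exp (α j)) * Real.exp E := by
          rw [tsum_mul_right, hS.tsum_eq]
      _ = Real.exp ((∑ j, Real.exp (α j)) + E) := by rw [← Real.exp_add]
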